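/- Let G be a finite directed graph satisfying condition SC with parameter F (|F| ≤ f), and let S be the unique source component of G−F. Then S (f+1)-propagates avoiding F to every vertex of V − S − F; that is, for every v ∈ V − S − F there exist f+1 paths from S to v, pairwise sharing only the terminal v, with no internal vertex in F. -/
import Mathlib


open Set

variable {V : Type*}

/-- A (directed) path: nonempty list of distinct vertices with consecutive edges. -/
def DiPath (E : V → V → Prop) (p : List V) : Prop :=
  p ≠ [] ∧ p.Nodup ∧ p.Chain' E

/-- A path excludes `F` if none of its internal vertices lies in `F`. -/
def Excludes (F : Set V) (p : List V) : Prop :=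
  ∀ x ∈ p.tail.dropLast, x ∉ F

/-- A path from (a vertex of) `A` to `v`. -/
def PathFromTo (E : V → V → Prop) (A : Set V) (v : V) (p : List V) : Prop :=
  DiPath E p ∧ (∃ a ∈ A, p.head? = some a) ∧ p.getLast? = some v

/-- There exist `n` pairwise internally-disjoint `A`-`v` paths excluding `F`
(sharing only the terminal `v`). -/
def DisjPaths (E : V → V → Prop) (F A : Set V) (v : V) (n : ℕ) : Prop :=
  ∃ P : Fin n → List V,
    (∀ i, PathFromTo E A v (P i) ∧ Excludes F (P i)) ∧
    (∀ i j, i ≠ j → ∀ x, x ∈ P i → x ∈ P j → x = v)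

/-- `A` (f+1)-propagates to every vertex of `B` avoiding `F`. -/
def Propagates (E : V → V → Prop) (f : ℕ) (F A B : Set V) : Prop :=
  ∀ v ∈ B, DisjPaths E F A v (f + 1)

/-- Condition SC with parameter `F`. -/
def CondSC (E : V → V → Prop) (f : ℕ) (F : Set V) : Prop :=
  ∀ A B : Set V, A ∪ B = Set.univ → A ∩ B = ∅ →
    (A \ F).Nonempty → (B \ F).Nonempty →
    Propagates E f F A (B \ F) ∨ Propagates E f F B (A \ F)

/-- Reachability within the vertex set `W`. -/
def ReachIn (E : V → V → Prop) (W : Set V) : V → V → Prop :=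
  Relation.ReflTransGen (fun a b => a ∈ W ∧ b ∈ W ∧ E a b)

/-- `S` is a (maximal) strongly connected component of the induced subgraph on `W`. -/
def IsSCCIn (E : V → V → Prop) (W S : Set V) : Prop :=
  S.Nonempty ∧ S ⊆ W ∧ (∀ u ∈ S, ∀ v ∈ S, ReachIn E W u v) ∧
  ∀ T, S ⊆ T → T ⊆ W → (∀ u ∈ T, ∀ v ∈ T, ReachIn E W u v) → T = S

/-- `S` is a source component of `G − F`: an SCC of the induced subgraph on `V − F`
receiving no edge from a vertex of `V − F` outside `S`. -/
def IsSourceComponent (E : V → V → Prop) (F S : Set V) : Prop :=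
  IsSCCIn E (Set.univ \ F) S ∧ ∀ u, u ∉ F → u ∉ S → ∀ s ∈ S, ¬ E u s

/-- In-neighborhood of `T` contained in `B`. -/
def inNbr (E : V → V → Prop) (B T : Set V) : Set V :=
  {u ∈ B | ∃ v ∈ T, E u v}

/-- `N(F→S)`: vertices of `F` with an edge into `S`. -/
def NFS (E : V → V → Prop) (F S : Set V) : Set V :=
  {w ∈ F | ∃ s ∈ S, E w s}

/-- Edge relation of the subgraph induced on `U`. -/
def inducedE (E : V → V → Prop) (U : Set V) : V → V → Prop :=
  fun a b => a ∈ U ∧ b ∈ U ∧ E a b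

/-- Condition NC with parameter `F`. -/
def CondNC (E : V → V → Prop) (f : ℕ) (F : Set V) : Prop :=
  ∀ L C R : Set V, L ∪ C ∪ R = Set.univ →
    L ∩ C = ∅ → L ∩ R = ∅ → C ∩ R = ∅ →
    (L \ F).Nonempty → (R \ F).Nonempty →
    f < (inNbr E (R ∪ C) (L \ F)).ncard ∨ f < (inNbr E (L ∪ C) (R \ F)).ncard

lemma head_in_F (E : V → V → Prop) (F S : Set V)
    (hsrc : ∀ u, u ∉ F → u ∉ S → ∀ s ∈ S, ¬ E u s) :
    ∀ p : List V, ∀ a s : V, List.Chain' E p → p.head? = some a →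
      p.getLast? = some s → a ∉ S → s ∈ S →
      (∀ x ∈ p.tail.dropLast, x ∉ F) → a ∈ F := by
  intro p
  induction p with
  | nil => intro a s _ h; simp at h
  | cons a rest ih =>
    intro a' s hchain hhead hlast haS hsS hexc
    simp only [List.head?_cons, Option.some.injEq] at hhead
    subst hhead
    cases rest with
    | nil =>
      simp only [List.getLast?_singleton, Option.some.injEq] at hlast
      subst hlast
      exact absurd hsS haS
    | cons b t =>
      have hab : E a b := hchain.rel_head
      by_cases hbS : b ∈ S
      · by_contra haF
        exact hsrc a haF haS b hbS hab
      · have hlast' : (b :: t).getLast? = some s := by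
          rw [← hlast]; simp [List.getLast?_cons_cons]
        have htne : t ≠ [] := by
          intro h; subst h
          simp only [List.getLast?_singleton, Option.some.injEq] at hlast'
          subst hlast'; exact hbS hsS
        have hbF : b ∈ F := by
          apply ih b s hchain.tail rfl hlast' hbS hsS
          intro x hx
          apply hexc
          simp only [List.tail_cons] at hx ⊢
          cases t with
          | nil => simp at hx
          | cons c u =>
            simp only [List.dropLast_cons₂, List.mem_cons] at hx ⊢
            tauto
        apply absurd hbF
        apply hexc
        simp only [List.tail_cons]
        cases t with
        | nil => exact absurd rfl htne
        | cons c u => simp [List.dropLast_cons₂]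


/-- The unique source component `S` of `G − F` (f+1)-propagates avoiding `F`
to every vertex of `V − S − F`. -/
theorem source_component_propagates [Fintype V] (E : V → V → Prop) (f : ℕ) (F S : Set V)
    (hF : F.ncard ≤ f) (hSC : CondSC E f F)
    (hS : IsSourceComponent E F S)
    (hUniq : ∀ S', IsSourceComponent E F S' → S' = S) :
    Propagates E f F S ((Set.univ \ S) \ F) := by
  obtain ⟨⟨hSne, hSsub, _, _⟩, hsrc⟩ := hS
  intro v hv
  have hSF : (S \ F).Nonempty := by
    obtain ⟨s0, hs0⟩ := hSne
    exact ⟨s0, hs0, fun h => (hSsub hs0).2 h⟩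
  rcases hSC S (Set.univ \ S) (by ext x; by_cases h : x ∈ S <;> simp [h])
      (by ext x; simp) hSF ⟨v, hv⟩ with h1 | h2
  · exact h1 v hv
  · exfalso
    obtain ⟨s0, hs0S, _⟩ := hSF
    obtain ⟨P, hP, hdisj⟩ := h2 s0 ⟨hs0S, fun h => (hSsub hs0S).2 h⟩
    choose a ha hhead using fun i => (hP i).1.2.1
    have haF : ∀ i, a i ∈ F := by
      intro i
      exact head_in_F E F S hsrc (P i) (a i) s0 (hP i).1.1.2.2 (hhead i)
        (hP i).1.2.2 (ha i).2 hs0S (hP i).2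
    have hainj : Function.Injective a := by
      intro i j hij
      by_contra hne
      have hmi : a i ∈ P i := List.mem_of_mem_head? (by rw [hhead i]; rfl)
      have hmj : a i ∈ P j := by
        rw [hij]; exact List.mem_of_mem_head? (by rw [hhead j]; rfl)
      have := hdisj i j hne (a i) hmi hmj
      exact (ha i).2 (this ▸ hs0S)
    have : f + 1 ≤ F.ncard := by
      classical
      have hfin : F.Finite := Set.toFinite F
      calc f + 1 = (Set.range a).ncard := by
            rw [Set.ncard_eq_toFinset_card', Set.toFinset_range,
              Finset.card_image_of_injective _ hainj, Finset.card_univ, Fintype.card_fin]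
        _ ≤ F.ncard := Set.ncard_le_ncard (Set.range_subset_iff.mpr haF) hfin
    omega
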